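/- Let T > 0 and let g : ℝ → ℝ be continuous and nonnegative on [0,T]. Suppose there are constants M ≥ 0 and K ≥ 0 with M·K·T² < 2 such that g(t)² ≤ 2·M·K·(∫₀^T g(s) ds)·(∫₀^t g(s) ds) for all t ∈ [0,T]. Then g(t) = 0 for all t ∈ [0,T]. -/

import Mathlib

open MeasureTheory intervalIntegral

/-- The integral-inequality argument concluding the uniqueness theorem:
if `g ≥ 0` is continuous on `[0,T]`, `M K T² < 2`, and
`g(t)² ≤ 2 M K (∫₀ᵀ g)(∫₀ᵗ g)` on `[0,T]`, then `g ≡ 0` on `[0,T]`. -/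
theorem stmt_10 (T : ℝ) (hT : 0 < T)
    (g : ℝ → ℝ) (hgc : ContinuousOn g (Set.Icc 0 T))
    (hgnn : ∀ t ∈ Set.Icc (0 : ℝ) T, 0 ≤ g t)
    (M K : ℝ) (hM : 0 ≤ M) (hK : 0 ≤ K) (hMKT : M * K * T ^ 2 < 2)
    (hineq : ∀ t ∈ Set.Icc (0 : ℝ) T,
      (g t) ^ 2 ≤ 2 * M * K * (∫ s in (0 : ℝ)..T, g s) * ∫ s in (0 : ℝ)..t, g s) :
    ∀ t ∈ Set.Icc (0 : ℝ) T, g t = 0 := by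
  set ξ : ℝ → ℝ := fun t => ∫ s in (0 : ℝ)..t, g s with hξ
  set C : ℝ := 2 * M * K * ξ T with hC
  -- integrability
  have hint : ∀ t ∈ Set.Icc (0:ℝ) T, IntervalIntegrable g volume 0 t := by
    intro t ht
    apply (hgc.mono ?_).intervalIntegrable
    rw [Set.uIcc_of_le ht.1]
    exact Set.Icc_subset_Icc le_rfl ht.2
  -- ξ nonneg & monotone
  have hξmono : MonotoneOn ξ (Set.Icc 0 T) := by
    intro a ha b hb hab
    have hsplit : ξ a + (∫ s in a..b, g s) = ξ b := by
      apply intervalIntegral.integral_add_adjacent_intervals (hint a ha)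
      apply ((hint b hb).mono_set ?_)
      rw [Set.uIcc_of_le hab, Set.uIcc_of_le hb.1]
      exact Set.Icc_subset_Icc ha.1 le_rfl
    have h2 : 0 ≤ ∫ s in a..b, g s := by
      apply intervalIntegral.integral_nonneg hab
      intro s hs
      exact hgnn s ⟨ha.1.trans hs.1, hs.2.trans hb.2⟩
    linarith
  have hξ0 : ξ 0 = 0 := by simp [hξ]
  have hξnn : ∀ t ∈ Set.Icc (0:ℝ) T, 0 ≤ ξ t := by
    intro t ht
    have := hξmono (Set.left_mem_Icc.2 hT.le) ht ht.1
    rwa [hξ0] at this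
  have hξT : 0 ≤ ξ T := hξnn T (Set.right_mem_Icc.2 hT.le)
  have hCnn : 0 ≤ C := by positivity
  -- continuity of ξ on Icc
  have hξcont : ContinuousOn ξ (Set.Icc 0 T) := by
    have h1 : IntegrableOn g (Set.uIcc 0 T) volume := by
      rw [Set.uIcc_of_le hT.le]
      exact hgc.integrableOn_Icc
    have := intervalIntegral.continuousOn_primitive_interval (f := g) (μ := volume) h1
    rwa [Set.uIcc_of_le hT.le] at this
  -- key: ξ T ≤ C * T^2 / 4 + √C * T * δ for all δ > 0
  have hmain : ∀ δ > (0:ℝ), ξ T ≤ C * T ^ 2 / 4 + Real.sqrt C * T * δ := by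
    intro δ hδ
    set ε : ℝ := δ ^ 2 with hε
    have hεpos : 0 < ε := by positivity
    set F : ℝ → ℝ := fun t => Real.sqrt C / 2 * t + δ - Real.sqrt (ξ t + ε) with hF
    have hFcont : ContinuousOn F (Set.Icc 0 T) := by
      apply ContinuousOn.sub (by fun_prop)
      exact ((hξcont.add continuousOn_const).sqrt)
    have hFderiv : ∀ t ∈ Set.Ioo (0:ℝ) T,
        HasDerivAt F (Real.sqrt C / 2 - g t / (2 * Real.sqrt (ξ t + ε))) t := by
      intro t ht
      have htI : t ∈ Set.Icc (0:ℝ) T := Set.Ioo_subset_Icc_self ht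
      have hd1 : HasDerivAt ξ (g t) t := by
        apply intervalIntegral.integral_hasDerivAt_right (hint t htI)
        · exact ⟨Set.Ioo 0 T, Ioo_mem_nhds ht.1 ht.2,
            (hgc.mono Set.Ioo_subset_Icc_self).aestronglyMeasurable measurableSet_Ioo⟩
        · exact (hgc t htI).continuousAt (Icc_mem_nhds ht.1 ht.2)
      have hpos : 0 < ξ t + ε := by linarith [hξnn t htI]
      have hd2 : HasDerivAt (fun t => Real.sqrt (ξ t + ε))
          (g t / (2 * Real.sqrt (ξ t + ε))) t := by
        have := (Real.hasDerivAt_sqrt (ne_of_gt hpos)).comp t (hd1.add_const ε)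
        rw [show g t / (2 * Real.sqrt (ξ t + ε)) = 1 / (2 * Real.sqrt (ξ t + ε)) * g t by ring]
        exact this
      exact (((hasDerivAt_id t).const_mul (Real.sqrt C / 2)).add_const δ |>.sub hd2).congr_deriv (by simp)
    have hFmono : MonotoneOn F (Set.Icc 0 T) := by
      apply monotoneOn_of_deriv_nonneg (convex_Icc 0 T) hFcont
      · intro t ht
        rw [interior_Icc] at ht
        exact ((hFderiv t ht).differentiableAt).differentiableWithinAt
      · intro t ht
        rw [interior_Icc] at ht
        rw [(hFderiv t ht).deriv]
        have htI : t ∈ Set.Icc (0:ℝ) T := Set.Ioo_subset_Icc_self ht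
        have hpos : 0 < ξ t + ε := by linarith [hξnn t htI]
        have hsq : 0 < Real.sqrt (ξ t + ε) := Real.sqrt_pos.2 hpos
        have hg : g t ≤ Real.sqrt C * Real.sqrt (ξ t + ε) := by
          have h1 : (g t) ^ 2 ≤ C * (ξ t + ε) := by
            have h0 := hineq t htI
            rw [show (∫ s in (0:ℝ)..t, g s) = ξ t from rfl] at h0
            nlinarith [mul_nonneg hCnn hεpos.le]
          calc g t = Real.sqrt ((g t) ^ 2) := by
                rw [Real.sqrt_sq (hgnn t htI)]
            _ ≤ Real.sqrt (C * (ξ t + ε)) := Real.sqrt_le_sqrt h1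
            _ = Real.sqrt C * Real.sqrt (ξ t + ε) := Real.sqrt_mul hCnn _
        rw [sub_nonneg, div_le_iff₀ (by positivity)]
        nlinarith
    have h01 : F 0 ≤ F T :=
      hFmono (Set.left_mem_Icc.2 hT.le) (Set.right_mem_Icc.2 hT.le) hT.le
    have hF0 : F 0 = 0 := by
      show Real.sqrt C / 2 * 0 + δ - Real.sqrt (ξ 0 + ε) = 0
      rw [hξ0, zero_add, hε, Real.sqrt_sq hδ.le]; ring
    have hFT : F T = Real.sqrt C / 2 * T + δ - Real.sqrt (ξ T + ε) := rfl
    have hroot : Real.sqrt (ξ T + ε) ≤ Real.sqrt C / 2 * T + δ := by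
      rw [hF0, hFT] at h01; linarith
    have hsqnn : 0 ≤ Real.sqrt (ξ T + ε) := Real.sqrt_nonneg _
    have hsqsq : Real.sqrt (ξ T + ε) ^ 2 = ξ T + ε := Real.sq_sqrt (by linarith)
    have hCsq : Real.sqrt C ^ 2 = C := Real.sq_sqrt hCnn
    nlinarith
  have hle : ξ T ≤ C * T ^ 2 / 4 := by
    apply le_of_forall_pos_le_add
    intro ε hε
    have hδ : 0 < ε / (Real.sqrt C * T + 1) := by
      apply div_pos hε
      positivity
    have := hmain _ hδ
    have h2 : Real.sqrt C * T * (ε / (Real.sqrt C * T + 1)) ≤ ε := by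
      rw [mul_div_assoc' ]
      rw [div_le_iff₀ (by positivity)]
      have h3 : (0:ℝ) ≤ Real.sqrt C * T := by positivity
      nlinarith
    linarith
  -- conclude ξ T = 0
  have hξT0 : ξ T = 0 := by
    by_contra h
    have hpos : 0 < ξ T := lt_of_le_of_ne hξT (Ne.symm h)
    have : C * T ^ 2 / 4 < ξ T := by
      rw [hC]; nlinarith
    linarith
  intro t ht
  have h1 := hineq t ht
  have hC0 : C = 0 := by rw [hC, hξT0]; ring
  rw [hC0, zero_mul] at h1
  have h2 : (g t) ^ 2 = 0 := le_antisymm h1 (sq_nonneg _)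
  exact pow_eq_zero_iff (two_ne_zero) |>.mp h2
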